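/- Let Φ be a unital completely positive map on the algebra of n×n complex matrices given in Kraus form Φ(A) = Σ_k V_k* A V_k with Σ_k V_k* V_k = I. If A is a matrix satisfying Φ(A) = A, Φ(A*A) = A*A and Φ(AA*) = AA*, then A commutes with every V_k and with every V_k*. -/
import Mathlib


open Matrix Finset

private lemma sum_ctm_zero {n N : ℕ} (D : Fin N → Matrix (Fin n) (Fin n) ℂ)
    (h : ∑ k, (D k)ᴴ * D k = 0) : ∀ k, D k = 0 := by
  have trform : ∀ k, Matrix.trace ((D k)ᴴ * D k) =
      ((∑ i, ∑ j, Complex.normSq (D k i j) : ℝ) : ℂ) := by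
    intro k
    simp only [Matrix.trace, Matrix.diag, Matrix.mul_apply, Matrix.conjTranspose_apply]
    push_cast
    rw [Finset.sum_comm]
    refine Finset.sum_congr rfl fun i _ => Finset.sum_congr rfl fun j _ => ?_
    rw [Complex.normSq_eq_conj_mul_self]
    rfl
  have hsum : ∑ k, Matrix.trace ((D k)ᴴ * D k) = 0 := by
    rw [← Matrix.trace_sum, h]; simp
  simp_rw [trform, ← Complex.ofReal_sum, Complex.ofReal_eq_zero] at hsum
  have hsumR := hsum
  intro k
  ext i j
  have : Complex.normSq (D k i j) = 0 := by
    have h1 := (Finset.sum_eq_zero_iff_of_nonneg (fun k _ =>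
      Finset.sum_nonneg fun i _ => Finset.sum_nonneg fun j _ =>
        Complex.normSq_nonneg _)).mp hsumR k (Finset.mem_univ k)
    have h2 := (Finset.sum_eq_zero_iff_of_nonneg (fun i _ =>
      Finset.sum_nonneg fun j _ => Complex.normSq_nonneg _)).mp h1 i (Finset.mem_univ i)
    exact (Finset.sum_eq_zero_iff_of_nonneg (fun j _ =>
      Complex.normSq_nonneg _)).mp h2 j (Finset.mem_univ j)
  simpa using Complex.normSq_eq_zero.mp this

private lemma comm_aux {n m : ℕ} (V : Fin m → Matrix (Fin n) (Fin n) ℂ)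
    (hV : ∑ k, (V k)ᴴ * V k = 1)
    (B : Matrix (Fin n) (Fin n) ℂ)
    (hB : ∑ k, (V k)ᴴ * B * V k = B)
    (hB' : ∑ k, (V k)ᴴ * Bᴴ * V k = Bᴴ)
    (hBB : ∑ k, (V k)ᴴ * (Bᴴ * B) * V k = Bᴴ * B) :
    ∀ k, B * V k = V k * B := by
  have key : ∑ k, (B * V k - V k * B)ᴴ * (B * V k - V k * B) = 0 := by
    have expand : ∀ k, (B * V k - V k * B)ᴴ * (B * V k - V k * B)
        = (V k)ᴴ * (Bᴴ * B) * V k - ((V k)ᴴ * Bᴴ * V k) * B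
          - Bᴴ * ((V k)ᴴ * B * V k) + Bᴴ * ((V k)ᴴ * V k) * B := by
      intro k
      simp only [Matrix.conjTranspose_sub, Matrix.conjTranspose_mul]
      noncomm_ring
    simp_rw [expand]
    rw [Finset.sum_add_distrib, Finset.sum_sub_distrib, Finset.sum_sub_distrib,
      ← Finset.sum_mul, ← Finset.mul_sum, hBB, hB', hB]
    have : ∑ k, Bᴴ * ((V k)ᴴ * V k) * B = Bᴴ * (∑ k, (V k)ᴴ * V k) * B := by
      rw [← Finset.sum_mul, ← Finset.mul_sum]
    rw [this, hV]
    simp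
  intro k
  have := sum_ctm_zero _ key k
  linear_combination (norm := abel) this

theorem stmt_0 {n m : ℕ} (V : Fin m → Matrix (Fin n) (Fin n) ℂ)
    (hV : ∑ k, (V k)ᴴ * V k = 1)
    (A : Matrix (Fin n) (Fin n) ℂ)
    (hA : ∑ k, (V k)ᴴ * A * V k = A)
    (hAA : ∑ k, (V k)ᴴ * (Aᴴ * A) * V k = Aᴴ * A)
    (hAA' : ∑ k, (V k)ᴴ * (A * Aᴴ) * V k = A * Aᴴ) :
    ∀ k, A * V k = V k * A ∧ A * (V k)ᴴ = (V k)ᴴ * A := by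
  have hA' : ∑ k, (V k)ᴴ * Aᴴ * V k = Aᴴ := by
    have := congrArg Matrix.conjTranspose hA
    simpa [Matrix.conjTranspose_sum, Matrix.conjTranspose_mul, Matrix.mul_assoc] using this
  have h1 := comm_aux V hV A hA hA' hAA
  have h2 := comm_aux V hV Aᴴ hA' (by simpa using hA) (by simpa using hAA')
  intro k
  refine ⟨h1 k, ?_⟩
  have := congrArg Matrix.conjTranspose (h2 k)
  simpa [Matrix.conjTranspose_mul] using this.symm
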